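/- Consider the regularized stable matching game with waiting-list payoffs, where each player m maximizes U_m(x) = ∑_{w∈W} μ_{mw} (1 − ∑_{k >_w m} x_{kw}) x_{mw} − (β/2)‖x_m‖², and let F(x) = (∇_{x_m} U_m(x))_{m∈M}. Then for any two strategy profiles x and x', (x' − x)ᵀ(F(x') − F(x)) = −(1/2) ∑_{w∈W} (x'_w − x_w)ᵀ Q^w (x'_w − x_w), where x_w = (x_{mw})_{m∈M} and, after relabeling the men so that woman w's preference order is 1 >_w 2 >_w … >_w n, Q^w is the symmetric n×n matrix with diagonal entries Q^w_{mm} = 2β and off-diagonal entries Q^w_{mk} = μ_{mw} for k < m (and Q^w_{mk} = μ_{kw} for k > m, by symmetry). In particular, if β > n μ_max/2, then the regularized stable matching game with waiting-list payoffs is a monotone game: (x' − x)ᵀ(F(x') − F(x)) ≤ 0 for all strategy profiles x, x'. -/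

import Mathlib

open Finset Real MeasureTheory

namespace SM

variable {n : ℕ}

/-- The set of men that woman `w` strictly prefers to man `m`
(`rankW w k` is woman `w`'s cardinal ranking score of man `k`;
`k >_w m` iff `rankW w m < rankW w k`). -/
noncomputable def better (rankW : Fin n → Fin n → ℝ) (w m : Fin n) : Finset (Fin n) :=
  Finset.univ.filter fun k => rankW w m < rankW w k

/-- Market assumptions: men's cardinal preferences lie in `(0,1]` with no ties, and each
woman's ranking of the men is strict (injective scores). -/
def MarketHyp (μp rankW : Fin n → Fin n → ℝ) : Prop :=
  (∀ m w, μp m w ∈ Set.Ioc (0:ℝ) 1) ∧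
  (∀ m w w', w ≠ w' → μp m w ≠ μp m w') ∧
  (∀ w, Function.Injective (rankW w))

/-- `v_{mw}(x) = μ_{mw} ∏_{k >_w m} (1 - x_{kw})`. -/
noncomputable def vv (μp rankW : Fin n → Fin n → ℝ) (x : Fin n → Fin n → ℝ) (m w : Fin n) : ℝ :=
  μp m w * ∏ k ∈ better rankW w m, (1 - x k w)

/-- Payoff `u_m(x) = ∑_w v_{mw}(x) x_{mw}` of man `m` in the stable matching game. -/
noncomputable def uu (μp rankW : Fin n → Fin n → ℝ) (x : Fin n → Fin n → ℝ) (m : Fin n) : ℝ :=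
  ∑ w, vv μp rankW x m w * x m w

/-- Mixed strategy: a probability vector over the women. -/
def IsStrategy (y : Fin n → ℝ) : Prop := (∀ w, 0 ≤ y w) ∧ ∑ w, y w = 1

/-- Pure strategy: the indicator vector of a single woman. -/
def IsPure (y : Fin n → ℝ) : Prop := ∃ w₀, y = fun w => if w = w₀ then (1:ℝ) else 0

/-- (Mixed) Nash equilibrium of the stable matching game. -/
def IsNE (μp rankW : Fin n → Fin n → ℝ) (x : Fin n → Fin n → ℝ) : Prop :=
  (∀ m, IsStrategy (x m)) ∧
  ∀ m y, IsStrategy y → uu μp rankW (Function.update x m y) m ≤ uu μp rankW x m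

/-- Pure Nash equilibrium of the stable matching game. -/
def IsPureNE (μp rankW : Fin n → Fin n → ℝ) (x : Fin n → Fin n → ℝ) : Prop :=
  (∀ m, IsPure (x m)) ∧
  ∀ m y, IsPure y → uu μp rankW (Function.update x m y) m ≤ uu μp rankW x m

/-- Characteristic vector of the perfect matching `σ`. -/
def charVec (σ : Equiv.Perm (Fin n)) : Fin n → Fin n → ℝ :=
  fun m w => if w = σ m then 1 else 0

/-- A perfect matching `σ` is stable iff it admits no blocking pair `(m, σ m')`. -/
def IsStableMatching (μp rankW : Fin n → Fin n → ℝ) (σ : Equiv.Perm (Fin n)) : Prop :=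
  ¬ ∃ m m' : Fin n, m ≠ m' ∧ μp m (σ m) < μp m (σ m') ∧ rankW (σ m') m' < rankW (σ m') m

/-- `Δ = min_{m, w ≠ w'} |μ_{mw} - μ_{mw'}|`. -/
noncomputable def gapDelta (μp : Fin n → Fin n → ℝ) : ℝ :=
  sInf {d : ℝ | ∃ m w w' : Fin n, w ≠ w' ∧ d = |μp m w - μp m w'|}

/-- `μ_min = min_{m,w} μ_{mw}`. -/
noncomputable def muMin (μp : Fin n → Fin n → ℝ) : ℝ :=
  sInf {a : ℝ | ∃ m w : Fin n, a = μp m w}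

/-- `μ_max = max_{m,w} μ_{mw}`. -/
noncomputable def muMax (μp : Fin n → Fin n → ℝ) : ℝ :=
  sSup {a : ℝ | ∃ m w : Fin n, a = μp m w}

/-- Entrywise ℓ¹ distance on strategy profiles. -/
noncomputable def l1dist (x y : Fin n → Fin n → ℝ) : ℝ :=
  ∑ m, ∑ w, |x m w - y m w|

/-- The logit (exponential-weights) map. -/
noncomputable def logit (η : ℝ) (L : Fin n → ℝ) (w : Fin n) : ℝ :=
  Real.exp (η * L w) / ∑ w', Real.exp (η * L w')

/-- Waiting-list payoff `u_m(x) = ∑_w μ_{mw} (1 - ∑_{k >_w m} x_{kw}) x_{mw}`. -/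
noncomputable def uWL (μp rankW : Fin n → Fin n → ℝ) (x : Fin n → Fin n → ℝ) (m : Fin n) : ℝ :=
  ∑ w, μp m w * (1 - ∑ k ∈ better rankW w m, x k w) * x m w

/-- Pure Nash equilibrium of the waiting-list stable matching game. -/
def IsPureNEWL (μp rankW : Fin n → Fin n → ℝ) (x : Fin n → Fin n → ℝ) : Prop :=
  (∀ m, IsPure (x m)) ∧
  ∀ m y, IsPure y → uWL μp rankW (Function.update x m y) m ≤ uWL μp rankW x m

/-- (Mixed) Nash equilibrium of the waiting-list stable matching game. -/
def IsNEWL (μp rankW : Fin n → Fin n → ℝ) (x : Fin n → Fin n → ℝ) : Prop :=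
  (∀ m, IsStrategy (x m)) ∧
  ∀ m y, IsStrategy y → uWL μp rankW (Function.update x m y) m ≤ uWL μp rankW x m

/-- Regularized waiting-list payoff `U_m(x) = u_m(x) - (β/2) ‖x_m‖²`. -/
noncomputable def Ureg (μp rankW : Fin n → Fin n → ℝ) (β : ℝ) (x : Fin n → Fin n → ℝ)
    (m : Fin n) : ℝ :=
  uWL μp rankW x m - β/2 * ∑ w, (x m w)^2

/-- The matrix `Q^w = Aᵀ + A + 2βI`, where `A_{mk} = μ_{mw} 𝟏{k >_w m}`. -/
noncomputable def Qw (μp rankW : Fin n → Fin n → ℝ) (β : ℝ) (w m k : Fin n) : ℝ :=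
  (if rankW w m < rankW w k then μp m w else 0) +
    (if rankW w k < rankW w m then μp k w else 0) +
    (if m = k then 2*β else 0)

/-- Theorem 7: the regularized waiting-list stable matching game satisfies
`(x'-x)ᵀ(F(x')-F(x)) = -(1/2)∑_w (x'_w-x_w)ᵀ Q^w (x'_w-x_w)`; in particular it is a
monotone game whenever `β > n μ_max / 2`. -/
theorem regularized_waiting_list_monotone {n : ℕ} (μp rankW : Fin n → Fin n → ℝ)
    (hμ : ∀ m w, μp m w ∈ Set.Ioc (0:ℝ) 1)
    (hrank : ∀ w, Function.Injective (rankW w))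
    (β : ℝ) (hβpos : 0 < β)
    (Fr : (Fin n → Fin n → ℝ) → Fin n → Fin n → ℝ)
    (hFr : ∀ (x : Fin n → Fin n → ℝ) (m w : Fin n),
      HasDerivAt
        (fun s : ℝ => Ureg μp rankW β (Function.update x m (Function.update (x m) w s)) m)
        (Fr x m w) (x m w)) :
    ∀ x x' : Fin n → Fin n → ℝ, (∀ m, IsStrategy (x m)) → (∀ m, IsStrategy (x' m)) →
      (∑ m, ∑ w, (x' m w - x m w) * (Fr x' m w - Fr x m w)
          = -(1/2) * ∑ w, ∑ m, ∑ k, (x' m w - x m w) * Qw μp rankW β w m k * (x' k w - x k w)) ∧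
        (n * muMax μp / 2 < β →
          ∑ m, ∑ w, (x' m w - x m w) * (Fr x' m w - Fr x m w) ≤ 0) := by
  -- Closed form for the gradient
  have hFr' : ∀ (y : Fin n → Fin n → ℝ) (m w : Fin n),
      Fr y m w = μp m w * (1 - ∑ k ∈ better rankW w m, y k w) - β * y m w := by
    intro y m w
    refine (hFr y m w).unique ?_
    have hrw : (fun s : ℝ => Ureg μp rankW β (Function.update y m (Function.update (y m) w s)) m)
        = fun s : ℝ => ∑ w', (μp m w' * (1 - ∑ k ∈ better rankW w' m, y k w')
            * (if w' = w then s else y m w') - β/2 * (if w' = w then s else y m w')^2) := by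
      funext s
      have hz : ∀ w', Function.update y m (Function.update (y m) w s) m w'
          = if w' = w then s else y m w' := by
        intro w'; rw [Function.update_self, Function.update_apply]
      have hS : ∀ w', ∑ k ∈ better rankW w' m,
            Function.update y m (Function.update (y m) w s) k w'
          = ∑ k ∈ better rankW w' m, y k w' := by
        intro w'
        refine Finset.sum_congr rfl fun k hk => ?_
        have hkm : k ≠ m := by
          simp only [better, Finset.mem_filter] at hk
          intro h; exact lt_irrefl _ (h ▸ hk.2)
        rw [Function.update_of_ne hkm]
      unfold Ureg uWL
      rw [Finset.sum_sub_distrib]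
      congr 1
      · exact Finset.sum_congr rfl fun w' _ => by rw [hz, hS]
      · rw [Finset.mul_sum]
        exact Finset.sum_congr rfl fun w' _ => by rw [hz]
    rw [hrw]
    have hder : ∀ w' ∈ (Finset.univ : Finset (Fin n)),
        HasDerivAt (fun s : ℝ => μp m w' * (1 - ∑ k ∈ better rankW w' m, y k w')
            * (if w' = w then s else y m w') - β/2 * (if w' = w then s else y m w')^2)
          (if w' = w then μp m w * (1 - ∑ k ∈ better rankW w m, y k w) - β * y m w else 0)
          (y m w) := by
      intro w' _
      by_cases h : w' = w
      · subst h
        have hfun : (fun s : ℝ => μp m w' * (1 - ∑ k ∈ better rankW w' m, y k w')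
              * (if w' = w' then s else y m w') - β/2 * (if w' = w' then s else y m w')^2)
            = fun s : ℝ => μp m w' * (1 - ∑ k ∈ better rankW w' m, y k w') * s - β/2 * s^2 := by
          funext s; rw [if_pos rfl]
        rw [hfun, if_pos rfl]
        have h1 : HasDerivAt (fun s : ℝ =>
              μp m w' * (1 - ∑ k ∈ better rankW w' m, y k w') * s)
            (μp m w' * (1 - ∑ k ∈ better rankW w' m, y k w')) (y m w') := by
          simpa using (hasDerivAt_id (y m w')).const_mul
            (μp m w' * (1 - ∑ k ∈ better rankW w' m, y k w'))
        have h2 : HasDerivAt (fun s : ℝ => β/2 * s^2) (β/2 * (2 * y m w' ^ 1)) (y m w') :=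
          (hasDerivAt_pow 2 (y m w')).const_mul (β/2)
        have := h1.fun_sub h2
        exact this.congr_deriv (by ring)
      · simp only [if_neg h]
        exact hasDerivAt_const _ _
    have hsum := HasDerivAt.fun_sum hder
    have hval : ∑ w' : Fin n, (if w' = w then
          μp m w * (1 - ∑ k ∈ better rankW w m, y k w) - β * y m w else (0:ℝ))
        = μp m w * (1 - ∑ k ∈ better rankW w m, y k w) - β * y m w := by
      rw [Finset.sum_ite_eq' Finset.univ w]
      exact if_pos (Finset.mem_univ w)
    rw [← hval]
    exact hsum
  intro x x' _hx _hx'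
  -- per-term formula for the difference of gradients
  have hterm : ∀ m w, (x' m w - x m w) * (Fr x' m w - Fr x m w)
      = -(μp m w * ((x' m w - x m w) * ∑ k ∈ better rankW w m, (x' k w - x k w)))
        - β * (x' m w - x m w)^2 := by
    intro m w
    rw [hFr' x', hFr' x, Finset.sum_sub_distrib]
    ring
  -- the LHS, reorganized per woman
  have hL : ∑ m, ∑ w, (x' m w - x m w) * (Fr x' m w - Fr x m w)
      = ∑ w, (-(∑ m, μp m w * ((x' m w - x m w) * ∑ k ∈ better rankW w m, (x' k w - x k w)))
          - β * ∑ m, (x' m w - x m w)^2) := by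
    rw [Finset.sum_comm]
    refine Finset.sum_congr rfl fun w _ => ?_
    simp only [hterm]
    rw [Finset.sum_sub_distrib, Finset.sum_neg_distrib, Finset.mul_sum]
  -- quadratic form of Qw per woman
  have hQ : ∀ w, ∑ m, ∑ k, (x' m w - x m w) * Qw μp rankW β w m k * (x' k w - x k w)
      = 2 * ∑ m, μp m w * ((x' m w - x m w) * ∑ k ∈ better rankW w m, (x' k w - x k w))
        + 2 * β * ∑ m, (x' m w - x m w)^2 := by
    intro w
    have expand : ∀ m k, (x' m w - x m w) * Qw μp rankW β w m k * (x' k w - x k w)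
        = (if rankW w m < rankW w k then μp m w * ((x' m w - x m w) * (x' k w - x k w)) else 0)
          + (if rankW w k < rankW w m then μp k w * ((x' m w - x m w) * (x' k w - x k w)) else 0)
          + (if m = k then 2*β * ((x' m w - x m w) * (x' k w - x k w)) else 0) := by
      intro m k
      simp only [Qw]
      split_ifs <;> ring
    simp only [expand, Finset.sum_add_distrib]
    have hbet : ∀ m, better rankW w m
        = Finset.univ.filter (fun k => rankW w m < rankW w k) := fun _ => rfl
    have h1 : ∑ m, ∑ k, (if rankW w m < rankW w k
          then μp m w * ((x' m w - x m w) * (x' k w - x k w)) else 0)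
        = ∑ m, μp m w * ((x' m w - x m w) * ∑ k ∈ better rankW w m, (x' k w - x k w)) := by
      refine Finset.sum_congr rfl fun m _ => ?_
      rw [Finset.mul_sum, Finset.mul_sum, hbet, Finset.sum_filter]
    have h2 : ∑ m, ∑ k, (if rankW w k < rankW w m
          then μp k w * ((x' m w - x m w) * (x' k w - x k w)) else 0)
        = ∑ m, ∑ k, (if rankW w m < rankW w k
          then μp m w * ((x' m w - x m w) * (x' k w - x k w)) else 0) := by
      rw [Finset.sum_comm]
      refine Finset.sum_congr rfl fun a _ => Finset.sum_congr rfl fun b _ => ?_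
      by_cases hc : rankW w a < rankW w b
      · rw [if_pos hc, if_pos hc]; ring
      · rw [if_neg hc, if_neg hc]
    have h3 : ∑ m, ∑ k, (if m = k then 2*β * ((x' m w - x m w) * (x' k w - x k w)) else 0)
        = ∑ m, 2*β*(x' m w - x m w)^2 := by
      refine Finset.sum_congr rfl fun m _ => ?_
      rw [Finset.sum_ite_eq Finset.univ m]
      simp [sq]
    rw [h2, h1, h3]
    rw [show (2:ℝ) * β * ∑ m, (x' m w - x m w)^2
        = ∑ m, 2*β*(x' m w - x m w)^2 by rw [Finset.mul_sum]]
    rw [show (2:ℝ) * ∑ m, μp m w * ((x' m w - x m w) * ∑ k ∈ better rankW w m, (x' k w - x k w))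
        = ∑ m, 2 * (μp m w * ((x' m w - x m w) * ∑ k ∈ better rankW w m, (x' k w - x k w)))
        by rw [Finset.mul_sum]]
    rw [← Finset.sum_add_distrib, ← Finset.sum_add_distrib, ← Finset.sum_add_distrib]
    exact Finset.sum_congr rfl fun m _ => by ring
  constructor
  · rw [hL, show ∑ w, ∑ m, ∑ k, (x' m w - x m w) * Qw μp rankW β w m k * (x' k w - x k w)
        = ∑ w, (2 * ∑ m, μp m w * ((x' m w - x m w) * ∑ k ∈ better rankW w m, (x' k w - x k w))
          + 2 * β * ∑ m, (x' m w - x m w)^2) from Finset.sum_congr rfl fun w _ => hQ w,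
      Finset.mul_sum]
    exact Finset.sum_congr rfl fun w _ => by ring
  · intro hβ2
    rw [hL]
    rcases Nat.eq_zero_or_pos n with hn | hn
    · subst hn
      simp
    · -- μ_max bounds
      obtain ⟨m0⟩ : Nonempty (Fin n) := ⟨⟨0, hn⟩⟩
      have hbdd : BddAbove {a : ℝ | ∃ m w : Fin n, a = μp m w} :=
        ⟨1, fun a ⟨m, w, h⟩ => h ▸ (hμ m w).2⟩
      have hle : ∀ m w, μp m w ≤ muMax μp := fun m w => le_csSup hbdd ⟨m, w, rfl⟩
      have hmm0 : 0 ≤ muMax μp := le_trans (hμ m0 m0).1.le (hle m0 m0)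
      refine Finset.sum_nonpos fun w _ => ?_
      set X := ∑ m, μp m w * ((x' m w - x m w) * ∑ k ∈ better rankW w m, (x' k w - x k w))
        with hX
      set Y := ∑ m, (x' m w - x m w)^2 with hY
      set T := ∑ m, |x' m w - x m w| with hT
      set P := ∑ m, ∑ k ∈ better rankW w m, |x' m w - x m w| * |x' k w - x k w| with hP
      have hYnn : 0 ≤ Y := Finset.sum_nonneg fun m _ => sq_nonneg _
      have hPnn : 0 ≤ P := Finset.sum_nonneg fun m _ =>
        Finset.sum_nonneg fun k _ => mul_nonneg (abs_nonneg _) (abs_nonneg _)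
      -- |X| ≤ μ_max * P
      have hXabs : |X| ≤ muMax μp * P := by
        calc |X| ≤ ∑ m, |μp m w * ((x' m w - x m w) * ∑ k ∈ better rankW w m, (x' k w - x k w))|
              := Finset.abs_sum_le_sum_abs _ _
          _ ≤ ∑ m, muMax μp * (∑ k ∈ better rankW w m, |x' m w - x m w| * |x' k w - x k w|) := by
              refine Finset.sum_le_sum fun m _ => ?_
              rw [abs_mul, abs_mul]
              have habs : |∑ k ∈ better rankW w m, (x' k w - x k w)|
                  ≤ ∑ k ∈ better rankW w m, |x' k w - x k w| := Finset.abs_sum_le_sum_abs _ _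
              calc |μp m w| * (|x' m w - x m w| * |∑ k ∈ better rankW w m, (x' k w - x k w)|)
                  ≤ muMax μp * (|x' m w - x m w| * ∑ k ∈ better rankW w m, |x' k w - x k w|) := by
                    have h1 : |μp m w| ≤ muMax μp := by
                      rw [abs_of_pos (hμ m w).1]; exact hle m w
                    gcongr
                _ = muMax μp * ∑ k ∈ better rankW w m, |x' m w - x m w| * |x' k w - x k w| := by
                    rw [Finset.mul_sum]
          _ = muMax μp * P := by rw [hP, Finset.mul_sum]
      -- 2 P ≤ T * T
      have h2P : P + P ≤ T * T := by
        have hPite : P = ∑ m, ∑ k, (if rankW w m < rankW w k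
            then |x' m w - x m w| * |x' k w - x k w| else 0) := by
          rw [hP]
          refine Finset.sum_congr rfl fun m _ => ?_
          rw [show better rankW w m
              = Finset.univ.filter (fun k => rankW w m < rankW w k) from rfl,
            Finset.sum_filter]
        have hPite2 : P = ∑ m, ∑ k, (if rankW w k < rankW w m
            then |x' m w - x m w| * |x' k w - x k w| else 0) := by
          rw [hPite, Finset.sum_comm]
          refine Finset.sum_congr rfl fun a _ => Finset.sum_congr rfl fun b _ => ?_
          by_cases hc : rankW w b < rankW w a
          · rw [if_pos hc, if_pos hc, mul_comm]
          · rw [if_neg hc, if_neg hc]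
        have hTT : T * T = ∑ m, ∑ k, |x' m w - x m w| * |x' k w - x k w| := by
          rw [hT, Finset.sum_mul_sum]
        rw [hTT]
        nth_rewrite 1 [hPite]
        rw [hPite2, ← Finset.sum_add_distrib]
        refine Finset.sum_le_sum fun m _ => ?_
        rw [← Finset.sum_add_distrib]
        refine Finset.sum_le_sum fun k _ => ?_
        by_cases h1 : rankW w m < rankW w k
        · rw [if_pos h1, if_neg (asymm h1)]
          simp
        · rw [if_neg h1]
          by_cases h2 : rankW w k < rankW w m
          · simp [h2]
          · rw [if_neg h2]
            simpa using mul_nonneg (abs_nonneg (x' m w - x m w)) (abs_nonneg (x' k w - x k w))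
      -- Cauchy–Schwarz: T² ≤ n Y
      have hTY : T * T ≤ n * Y := by
        have := Finset.sum_mul_sq_le_sq_mul_sq Finset.univ
          (fun m => |x' m w - x m w|) (fun _ => (1:ℝ))
        simp only [mul_one, one_pow, Finset.sum_const, Finset.card_univ, Fintype.card_fin,
          nsmul_eq_mul, sq_abs] at this
        calc T * T = (∑ m, |x' m w - x m w|)^2 := by rw [hT]; ring
          _ ≤ (∑ m, (x' m w - x m w)^2) * n := this
          _ = n * Y := by rw [hY]; ring
      -- combine
      have hc1 : muMax μp * (T * T) ≤ muMax μp * (n * Y) :=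
        mul_le_mul_of_nonneg_left hTY hmm0
      have hc2 : n * muMax μp / 2 * Y ≤ β * Y :=
        mul_le_mul_of_nonneg_right hβ2.le hYnn
      have hc3 : muMax μp * (P + P) ≤ muMax μp * (T * T) :=
        mul_le_mul_of_nonneg_left h2P hmm0
      have hnegX : -X ≤ |X| := neg_le.mpr (neg_abs_le X)
      have hmuP : muMax μp * P ≤ β * Y := by nlinarith [hXabs, hc1, hc2, hc3]
      linarith [hXabs, hnegX, hmuP]

end SM
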